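/- For every integer n ≥ 4, the polynomial Q_n(x) = x^n − 2(n−1)·Σ_{j=1}^{n−1} x^j + 1 satisfies Q_n(2n−1 − 1/(2n−1)^{n−2}) < 0. -/

import Mathlib

open Polynomial in
/-- The polynomial `Q_n(x) = x^n − 2(n−1)·Σ_{j=1}^{n−1} x^j + 1`. -/
noncomputable def Qpoly (n : ℕ) : Polynomial ℝ :=
  X ^ n - C (2 * ((n : ℝ) - 1)) * (∑ j ∈ Finset.Icc 1 (n - 1), X ^ j) + 1

/-- Core arithmetic inequality. -/
lemma stmt18_key (k : ℕ) (M ε x : ℝ) (hM : M = 2 * (k : ℝ) + 7)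
    (hε : ε = 1 / M ^ (k + 2)) (hx : x = M - ε) :
    x * x ^ (k + 4) - M * x ^ (k + 4) + M * x - 1 < 0 := by
  have hk0 : (0:ℝ) ≤ (k:ℝ) := Nat.cast_nonneg k
  have hM7 : (7:ℝ) ≤ M := by rw [hM]; linarith
  have hMpos : (0:ℝ) < M := by linarith
  have hPpos : (0:ℝ) < M ^ (k + 2) := by positivity
  have hP1 : (1:ℝ) ≤ M ^ (k + 2) := one_le_pow₀ (by linarith)
  have hεpos : 0 < ε := by rw [hε]; positivity
  have hεle1 : ε ≤ 1 := by rw [hε]; exact div_le_one_of_le₀ hP1 (by linarith)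
  -- Bernoulli : x^(k+4) ≥ M^(k+4) - (k+4) * ε * M^(k+3)
  have hber : (1:ℝ) + (k + 4 : ℕ) * (-(ε / M)) ≤ (1 + (-(ε / M))) ^ (k + 4) := by
    apply one_add_mul_le_pow
    have h1 : ε / M ≤ 1 := by
      rw [div_le_one hMpos]; linarith
    linarith
  have hxfac : x = M * (1 + (-(ε / M))) := by
    rw [hx]; field_simp; ring
  have hxpow : M ^ (k + 4) * (1 + (k + 4 : ℕ) * (-(ε / M))) ≤ x ^ (k + 4) := by
    rw [hxfac, mul_pow]
    exact mul_le_mul_of_nonneg_left hber (by positivity)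
  have hεM3 : ε * M ^ (k + 3) = M := by
    rw [hε]; field_simp [pow_succ]; ring
  have hεM4 : ε * M ^ (k + 4) = M ^ 2 := by
    rw [hε]; field_simp [pow_succ]; ring
  have hlb : M ^ (k + 4) - ((k:ℝ) + 4) * M ≤ x ^ (k + 4) := by
    refine le_trans (le_of_eq ?_) hxpow
    have : M ^ (k + 4) * (ε / M) = ε * M ^ (k + 3) := by
      rw [pow_succ]; field_simp
    push_cast
    nlinarith [this, hεM3]
  -- key smallness : (k+3) * M < M^(k+2)
  have hsmall : ((k:ℝ) + 3) * M < M ^ (k + 2) := by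
    have hb2 : (1:ℝ) + (k + 1 : ℕ) * (M - 1) ≤ (1 + (M - 1)) ^ (k + 1) :=
      one_add_mul_le_pow (by linarith) (k + 1)
    have h1M : (1:ℝ) + (M - 1) = M := by ring
    rw [h1M] at hb2
    have hpow1 : ((k:ℝ) + 3) < M ^ (k + 1) := by
      push_cast at hb2
      nlinarith [hb2]
    have : M ^ (k + 2) = M ^ (k + 1) * M := by rw [pow_succ]
    rw [this]
    exact mul_lt_mul_of_pos_right hpow1 hMpos
  -- conclude
  have hMε : ((k:ℝ) + 3) * (M * ε) < 1 := by
    have : ((k:ℝ) + 3) * (M * ε) = (((k:ℝ) + 3) * M) / M ^ (k + 2) := by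
      rw [hε]; field_simp
    rw [this, div_lt_one hPpos]
    exact hsmall
  -- M*x - 1 < ε * x^(k+4)
  have hmain : M * x - 1 < ε * x ^ (k + 4) := by
    have h1 : ε * (M ^ (k + 4) - ((k:ℝ) + 4) * M) ≤ ε * x ^ (k + 4) :=
      mul_le_mul_of_nonneg_left hlb (le_of_lt hεpos)
    have h2 : ε * (M ^ (k + 4) - ((k:ℝ) + 4) * M) = M ^ 2 - ((k:ℝ) + 4) * (M * ε) := by
      rw [mul_sub, hεM4]; ring
    have h3 : M * x - 1 = M ^ 2 - M * ε - 1 := by rw [hx]; ring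
    nlinarith [hMε]
  have hy : x * x ^ (k + 4) - M * x ^ (k + 4) = -(ε * x ^ (k + 4)) := by
    rw [hx]; ring
  linarith [hmain, hy]

theorem stmt18 (n : ℕ) (hn : 4 ≤ n) :
    (Qpoly n).eval (2 * (n : ℝ) - 1 - 1 / (2 * (n : ℝ) - 1) ^ (n - 2)) < 0 := by
  obtain ⟨k, rfl⟩ := Nat.exists_eq_add_of_le hn
  have e1 : 4 + k - 1 = k + 3 := by omega
  have e2 : 4 + k - 2 = k + 2 := by omega
  set M : ℝ := 2 * ((4 + k : ℕ) : ℝ) - 1 with hMdef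
  have hMval : M = 2 * (k : ℝ) + 7 := by rw [hMdef]; push_cast; ring
  have hk0 : (0:ℝ) ≤ (k:ℝ) := Nat.cast_nonneg k
  have hM7 : (7:ℝ) ≤ M := by rw [hMval]; linarith
  have hPpos : (0:ℝ) < M ^ (k + 2) := by positivity
  have hP1 : (1:ℝ) ≤ M ^ (k + 2) := one_le_pow₀ (by linarith)
  set ε : ℝ := 1 / M ^ (k + 2) with hεdef
  have hεpos : 0 < ε := by rw [hεdef]; positivity
  have hεle1 : ε ≤ 1 := by rw [hεdef]; exact div_le_one_of_le₀ hP1 (by linarith)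
  set x : ℝ := M - ε with hxdef
  have hx1 : (1:ℝ) < x := by rw [hxdef]; linarith
  have hxne1 : x ≠ 1 := ne_of_gt hx1
  have hxm1 : (0:ℝ) < x - 1 := by linarith
  rw [e2]
  show (Qpoly (4 + k)).eval x < 0
  have hsum : ∑ j ∈ Finset.Icc 1 (4 + k - 1), x ^ j = (x ^ (k + 4) - x) / (x - 1) := by
    rw [e1, ← Finset.Ico_add_one_right_eq_Icc]
    have := geom_sum_Ico hxne1 (show 1 ≤ k + 4 by omega)
    simpa [pow_one, add_assoc] using this
  have heval : (Qpoly (4 + k)).eval x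
      = x ^ (k + 4) - (M - 1) * ((x ^ (k + 4) - x) / (x - 1)) + 1 := by
    simp only [Qpoly, Polynomial.eval_add, Polynomial.eval_sub, Polynomial.eval_pow,
      Polynomial.eval_mul, Polynomial.eval_C, Polynomial.eval_X, Polynomial.eval_one,
      Polynomial.eval_finset_sum]
    rw [hsum]
    have : 2 * (((4 + k : ℕ) : ℝ) - 1) = M - 1 := by rw [hMdef]; push_cast; ring
    rw [this]
    congr 1
    · congr 1
      norm_num [add_comm]
  rw [heval]
  have hkey : x * x ^ (k + 4) - M * x ^ (k + 4) + M * x - 1 < 0 :=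
    stmt18_key k M ε x hMval hεdef hxdef
  have hprod : (x ^ (k + 4) - (M - 1) * ((x ^ (k + 4) - x) / (x - 1)) + 1) * (x - 1)
      = x * x ^ (k + 4) - M * x ^ (k + 4) + M * x - 1 := by
    field_simp
    ring
  have : (x ^ (k + 4) - (M - 1) * ((x ^ (k + 4) - x) / (x - 1)) + 1) * (x - 1)
      < 0 * (x - 1) := by
    rw [hprod, zero_mul]; exact hkey
  exact lt_of_mul_lt_mul_right this (le_of_lt hxm1)
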